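/- Let a, c ∈ (0,∞)^d satisfy ∑_{i=1}^d a_i²/c_i > 1. Then the symmetric matrix D = a aᵀ − diag(c) has exactly one positive eigenvalue, and this eigenvalue is simple. -/

import Mathlib

open Matrix Finset

variable {d : ℕ}

lemma dot_inner (x y : EuclideanSpace ℝ (Fin d)) :
    (x : Fin d → ℝ) ⬝ᵥ (y : Fin d → ℝ) = inner ℝ x y := by
  rw [EuclideanSpace.inner_eq_star_dotProduct, star_trivial, dotProduct_comm]

lemma quad_form (a c x : Fin d → ℝ) :
    x ⬝ᵥ ((Matrix.vecMulVec a a - Matrix.diagonal c) *ᵥ x)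
      = (a ⬝ᵥ x) ^ 2 - ∑ i, c i * x i ^ 2 := by
  rw [sub_mulVec, dotProduct_sub]
  congr 1
  · simp only [dotProduct, mulVec, vecMulVec_apply, dotProduct]
    rw [sq, Finset.sum_mul_sum]
    rw [Finset.sum_comm]
    refine Finset.sum_congr rfl fun i _ => ?_
    rw [Finset.mul_sum]
    refine Finset.sum_congr rfl fun j _ => by ring
  · simp only [dotProduct, mulVec_diagonal]
    exact Finset.sum_congr rfl fun i _ => by ring

lemma aux_form {d : ℕ} (M : Matrix (Fin d) (Fin d) ℝ) (u v : Fin d → ℝ) (lu lv α β : ℝ)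
    (huu : u ⬝ᵥ u = 1) (huv : u ⬝ᵥ v = 0) (hvu : v ⬝ᵥ u = 0) (hvv : v ⬝ᵥ v = 1)
    (hmu : M *ᵥ u = lu • u) (hmv : M *ᵥ v = lv • v) :
    (α • u - β • v) ⬝ᵥ (M *ᵥ (α • u - β • v)) = α ^ 2 * lu + β ^ 2 * lv := by
  rw [mulVec_sub, mulVec_smul, mulVec_smul, hmu, hmv]
  simp only [sub_dotProduct, smul_dotProduct, dotProduct_sub, dotProduct_smul, smul_eq_mul,
    huu, huv, hvu, hvv]
  ring

lemma aux_zero {d : ℕ} (a u v : Fin d → ℝ) :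
    a ⬝ᵥ ((a ⬝ᵥ v) • u - (a ⬝ᵥ u) • v) = 0 := by
  rw [dotProduct_sub, dotProduct_smul, dotProduct_smul]
  simp [mul_comm]

theorem unique_simple_positive_eigenvalue_rank_one {d : ℕ} (a c : Fin d → ℝ)
    (ha : ∀ i, 0 < a i) (hc : ∀ i, 0 < c i)
    (hsum : 1 < ∑ i, a i ^ 2 / c i)
    (hD : (Matrix.vecMulVec a a - Matrix.diagonal c).IsHermitian) :
    (Finset.univ.filter fun i => 0 < hD.eigenvalues i).card = 1 := by
  set M := Matrix.vecMulVec a a - Matrix.diagonal c with hM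
  set B := hD.eigenvectorBasis with hB
  set lam := hD.eigenvalues with hlam
  -- orthonormality in terms of dot products
  have hdot : ∀ i j : Fin d, (B i : Fin d → ℝ) ⬝ᵥ (B j : Fin d → ℝ) = if i = j then 1 else 0 := by
    intro i j
    rw [dot_inner]
    exact orthonormal_iff_ite.mp B.orthonormal i j
  have hmul : ∀ i : Fin d, M *ᵥ (B i : Fin d → ℝ) = lam i • (B i : Fin d → ℝ) :=
    fun i => hD.mulVec_eigenvectorBasis i
  -- at most one positive eigenvalue (pairwise argument)
  have hpair : ∀ i j : Fin d, i ≠ j → 0 < lam i → 0 < lam j → False := by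
    intro i j hij hi hj
    by_cases h0 : a ⬝ᵥ (B i : Fin d → ℝ) = 0
    · have e1 : (B i : Fin d → ℝ) ⬝ᵥ (M *ᵥ (B i : Fin d → ℝ)) = lam i := by
        rw [hmul, dotProduct_smul, hdot i i]
        simp
      rw [quad_form, h0] at e1
      have : ∑ k, c k * (B i : Fin d → ℝ) k ^ 2 ≥ 0 :=
        Finset.sum_nonneg fun k _ => mul_nonneg (hc k).le (sq_nonneg _)
      nlinarith
    · have h1 : (B i : Fin d → ℝ) ⬝ᵥ (B i : Fin d → ℝ) = 1 := by rw [hdot i i]; simp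
      have h2 : (B i : Fin d → ℝ) ⬝ᵥ (B j : Fin d → ℝ) = 0 := by rw [hdot i j, if_neg hij]
      have h3 : (B j : Fin d → ℝ) ⬝ᵥ (B i : Fin d → ℝ) = 0 := by
        rw [hdot j i, if_neg (Ne.symm hij)]
      have h4 : (B j : Fin d → ℝ) ⬝ᵥ (B j : Fin d → ℝ) = 1 := by rw [hdot j j]; simp
      set α := a ⬝ᵥ (B j : Fin d → ℝ) with hα
      set β := a ⬝ᵥ (B i : Fin d → ℝ) with hβ
      have e1 := aux_form M (B i : Fin d → ℝ) (B j : Fin d → ℝ) (lam i) (lam j) α β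
        h1 h2 h3 h4 (hmul i) (hmul j)
      have haw := aux_zero a (B i : Fin d → ℝ) (B j : Fin d → ℝ)
      rw [← hα, ← hβ] at haw
      rw [quad_form, haw] at e1
      have h5 : ∑ k, c k * (α • (B i : Fin d → ℝ) - β • (B j : Fin d → ℝ)) k ^ 2 ≥ 0 :=
        Finset.sum_nonneg fun k _ => mul_nonneg (hc k).le (sq_nonneg _)
      have h6 : 0 < β ^ 2 := by positivity
      nlinarith [sq_nonneg α]
  -- existence of a positive eigenvalue
  have hex : ∃ i, 0 < lam i := by
    set S := ∑ i, a i ^ 2 / c i with hS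
    set y : Fin d → ℝ := fun i => a i / c i with hy
    have hay : a ⬝ᵥ y = S := by
      refine Finset.sum_congr rfl fun i _ => ?_
      rw [hy]
      field_simp
    have hcy : ∑ i, c i * y i ^ 2 = S := by
      refine Finset.sum_congr rfl fun i _ => ?_
      rw [hy]
      field_simp [(hc i).ne']
    have hquad : y ⬝ᵥ (M *ᵥ y) = S ^ 2 - S := by
      rw [hM, quad_form, hay, hcy]
    have hpos : 0 < y ⬝ᵥ (M *ᵥ y) := by
      rw [hquad]; nlinarith
    -- expand in eigenbasis
    have ht : Mᵀ = M := by
      rw [← Matrix.conjTranspose_eq_transpose_of_trivial]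
      exact hD
    have hsymm : ∀ v w : Fin d → ℝ, v ⬝ᵥ (M *ᵥ w) = (M *ᵥ v) ⬝ᵥ w := fun v w => by
      rw [dotProduct_mulVec, ← Matrix.mulVec_transpose, ht]
    set yE : EuclideanSpace ℝ (Fin d) := WithLp.toLp 2 y with hyE
    have key : y ⬝ᵥ (M *ᵥ y) = ∑ k, lam k * ((B k : Fin d → ℝ) ⬝ᵥ y) ^ 2 := by
      have h1 : (inner ℝ yE (WithLp.toLp 2 (M *ᵥ y) : EuclideanSpace ℝ (Fin d)) : ℝ)
          = ∑ k, (inner ℝ yE (B k) : ℝ) * (inner ℝ (B k) (WithLp.toLp 2 (M *ᵥ y) : EuclideanSpace ℝ (Fin d)) : ℝ) :=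
        (B.sum_inner_mul_inner yE _).symm
      have h2 : y ⬝ᵥ (M *ᵥ y) = (inner ℝ yE (WithLp.toLp 2 (M *ᵥ y) : EuclideanSpace ℝ (Fin d)) : ℝ) :=
        dot_inner yE (WithLp.toLp 2 (M *ᵥ y))
      rw [h2, h1]
      refine Finset.sum_congr rfl fun k _ => ?_
      rw [← dot_inner, ← dot_inner]
      simp only [WithLp.ofLp_toLp]
      have h3 : (yE : Fin d → ℝ) ⬝ᵥ (B k : Fin d → ℝ) = (B k : Fin d → ℝ) ⬝ᵥ y :=
        dotProduct_comm _ _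
      have h4 : (B k : Fin d → ℝ) ⬝ᵥ (M *ᵥ y) = lam k * ((B k : Fin d → ℝ) ⬝ᵥ y) := by
        rw [hsymm, hmul, smul_dotProduct]
        rfl
      rw [h3, h4]
      ring
    by_contra hcon
    push_neg at hcon
    have : y ⬝ᵥ (M *ᵥ y) ≤ 0 := by
      rw [key]
      exact Finset.sum_nonpos fun k _ =>
        mul_nonpos_of_nonpos_of_nonneg (hcon k) (sq_nonneg _)
    linarith
  obtain ⟨i, hi⟩ := hex
  rw [Finset.card_eq_one]
  refine ⟨i, ?_⟩
  ext j
  simp only [Finset.mem_filter, Finset.mem_univ, true_and, Finset.mem_singleton]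
  constructor
  · intro hj
    by_contra hne
    exact hpair j i hne hj hi
  · intro h; subst h; exact hi
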